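/- Let P be a non-degenerate block-hereditary class of graphs, let d ≥ 2 be an integer, and let G be a graph. Suppose G contains no induced 2-connected subgraph on more than d and at most 2d − 2 vertices, and G contains no induced subgraph that is biconnected, has between 2 and d vertices, and is not in P. Then any two distinct (P ∩ B_{2,d})-clusters of G share at most one vertex, where B_{2,d} is the class of biconnected graphs with at least 2 and at most d vertices. -/

import Mathlib

open SimpleGraph

def PreconnOn {V : Type} (G : SimpleGraph V) (B : Set V) : Prop :=
  (G.induce B).Preconnected

def ConnOn {V : Type} (G : SimpleGraph V) (B : Set V) : Prop :=
  (G.induce B).Connected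

/-- `G[B]` is biconnected: connected with no cut vertex. -/
def BiconnOn {V : Type} (G : SimpleGraph V) (B : Set V) : Prop :=
  ConnOn G B ∧ ∀ v ∈ B, PreconnOn G (B \ {v})

/-- A `Q`-cluster of `G` (where `Q B` means "`G[B]` is isomorphic to a member of the
class `Q`"): a maximal vertex set inducing `K₁` or a member of `Q`. -/
def IsCluster {V : Type} (Q : Set V → Prop) (H : Set V) : Prop :=
  ((∃ v : V, H = {v}) ∨ Q H) ∧
    ∀ H' : Set V, H ⊆ H' → ((∃ v : V, H' = {v}) ∨ Q H') → H' = H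

def homOfSubset {V : Type} (G : SimpleGraph V) {A B : Set V} (h : A ⊆ B) :
    G.induce A →g G.induce B :=
  ⟨fun v => ⟨v.1, h v.2⟩, fun hab => hab⟩

lemma reach_mono {V : Type} (G : SimpleGraph V) {A B : Set V} (h : A ⊆ B)
    {x y : ↥A} (hr : (G.induce A).Reachable x y) :
    (G.induce B).Reachable ⟨x.1, h x.2⟩ ⟨y.1, h y.2⟩ :=
  hr.map (homOfSubset G h)

lemma preconn_union {V : Type} (G : SimpleGraph V) {A B : Set V} {w : V}
    (hwA : w ∈ A) (hwB : w ∈ B) (hA : PreconnOn G A) (hB : PreconnOn G B) :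
    PreconnOn G (A ∪ B) := by
  have key : ∀ z : ↥(A ∪ B), (G.induce (A ∪ B)).Reachable z ⟨w, Or.inl hwA⟩ := by
    rintro ⟨z, hz | hz⟩
    · exact reach_mono G (Set.subset_union_left) (hA ⟨z, hz⟩ ⟨w, hwA⟩)
    · exact reach_mono G (Set.subset_union_right) (hB ⟨z, hz⟩ ⟨w, hwB⟩)
  intro x y
  exact (key x).trans (key y).symm

lemma biconn_union {V : Type} [Fintype V] (G : SimpleGraph V) {A B : Set V}
    (hA : BiconnOn G A) (hB : BiconnOn G B) (h2 : 2 ≤ (A ∩ B).ncard) :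
    BiconnOn G (A ∪ B) := by
  have hfin : (A ∩ B).Finite := Set.toFinite _
  obtain ⟨w, hw⟩ : (A ∩ B).Nonempty := by
    rw [← Set.ncard_pos hfin]; omega
  constructor
  · haveI : Nonempty ↥(A ∪ B) := ⟨⟨w, Or.inl hw.1⟩⟩
    exact SimpleGraph.Connected.mk (preconn_union G hw.1 hw.2 hA.1.preconnected hB.1.preconnected)
  · intro v hv
    obtain ⟨a, ha, b, hb, hab⟩ : ∃ a ∈ A ∩ B, ∃ b ∈ A ∩ B, a ≠ b := by
      have h1 : 1 < (A ∩ B).ncard := by omega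
      rw [Set.one_lt_ncard_iff hfin] at h1
      obtain ⟨a, b, ha, hb, hab⟩ := h1
      exact ⟨a, ha, b, hb, hab⟩
    obtain ⟨u, hu, huv⟩ : ∃ u ∈ A ∩ B, u ≠ v := by
      by_cases hav : a = v
      · exact ⟨b, hb, fun h => hab (hav.trans h.symm)⟩
      · exact ⟨a, ha, hav⟩
    have hpA : PreconnOn G (A \ {v}) := by
      by_cases hvA : v ∈ A
      · exact hA.2 v hvA
      · rw [Set.diff_singleton_eq_self hvA]; exact hA.1.preconnected
    have hpB : PreconnOn G (B \ {v}) := by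
      by_cases hvB : v ∈ B
      · exact hB.2 v hvB
      · rw [Set.diff_singleton_eq_self hvB]; exact hB.1.preconnected
    have hdu : (A ∪ B) \ {v} = (A \ {v}) ∪ (B \ {v}) := Set.union_diff_distrib
    rw [hdu]
    exact preconn_union G ⟨hu.1, huv⟩ ⟨hu.2, huv⟩ hpA hpB

theorem stmt5 {V : Type} [Fintype V] [DecidableEq V]
    (G : SimpleGraph V) (P : Set V → Prop) (d : ℕ) (hd : 2 ≤ d)
    (hbicP : ∀ B : Set V, P B → BiconnOn G B)
    (hK2 : ∀ u v : V, G.Adj u v → P {u, v})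
    (hObd : ∀ B : Set V, BiconnOn G B → 3 ≤ B.ncard →
      ¬ (d < B.ncard ∧ B.ncard ≤ 2 * d - 2))
    (hFree : ∀ B : Set V, BiconnOn G B → 2 ≤ B.ncard → B.ncard ≤ d → P B) :
    ∀ H₁ H₂ : Set V,
      IsCluster (fun B => P B ∧ BiconnOn G B ∧ 2 ≤ B.ncard ∧ B.ncard ≤ d) H₁ →
      IsCluster (fun B => P B ∧ BiconnOn G B ∧ 2 ≤ B.ncard ∧ B.ncard ≤ d) H₂ →
      H₁ ≠ H₂ → (H₁ ∩ H₂).ncard ≤ 1 := by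
  intro H₁ H₂ h1 h2 hne
  by_contra hcard
  push_neg at hcard
  have hsing : ∀ v : V, ∀ H : Set V, ¬ (1 : ℕ) < (({v} : Set V) ∩ H).ncard := by
    intro v H h
    have := Set.ncard_le_ncard (Set.inter_subset_left (s := ({v} : Set V)) (t := H))
      (Set.toFinite _)
    rw [Set.ncard_singleton] at this
    omega
  have hQ1 : P H₁ ∧ BiconnOn G H₁ ∧ 2 ≤ H₁.ncard ∧ H₁.ncard ≤ d := by
    rcases h1.1 with ⟨v, rfl⟩ | hq
    · exact absurd hcard (hsing v H₂)
    · exact hq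
  have hQ2 : P H₂ ∧ BiconnOn G H₂ ∧ 2 ≤ H₂.ncard ∧ H₂.ncard ≤ d := by
    rcases h2.1 with ⟨v, rfl⟩ | hq
    · rw [Set.inter_comm] at hcard
      exact absurd hcard (hsing v H₁)
    · exact hq
  have hUb : BiconnOn G (H₁ ∪ H₂) := biconn_union G hQ1.2.1 hQ2.2.1 (by omega)
  have hU1 : H₁ ⊆ H₁ ∪ H₂ := Set.subset_union_left
  have hU2 : H₂ ⊆ H₁ ∪ H₂ := Set.subset_union_right
  have hUne : H₁ ∪ H₂ ≠ H₁ := by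
    intro h
    exact hne (h2.2 H₁ (h ▸ hU2) (Or.inr hQ1))
  have hcardU : (H₁ ∪ H₂).ncard + (H₁ ∩ H₂).ncard = H₁.ncard + H₂.ncard :=
    Set.ncard_union_add_ncard_inter _ _
  have hUge : H₁.ncard ≤ (H₁ ∪ H₂).ncard := Set.ncard_le_ncard hU1 (Set.toFinite _)
  by_cases hUd : (H₁ ∪ H₂).ncard ≤ d
  · have hP : P (H₁ ∪ H₂) := hFree _ hUb (by omega) hUd
    exact hUne (h1.2 _ hU1 (Or.inr ⟨hP, hUb, by omega, hUd⟩))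
  · push_neg at hUd
    exact hObd _ hUb (by omega) ⟨hUd, by omega⟩
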